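/- Let n ≥ 1, let P be an n×n real matrix and y ∈ ℝⁿ. For each i, j define ψ_{ij} : ℝ × ℝ → ℝ by ψ_{ij}(u,v) = −P_{ij}·u·v for j ≠ i and ψ_{ii}(u,v) = −(1/2)(P_{ii} − 1)·u². Then for every i, the derivative at y_i of the function u ↦ ψ_{ij}(u, y_j) equals −P_{ij} y_j for j ≠ i and −(P_{ii} − 1) y_i for j = i, and the synchronous gradient-descent update y_i′ = y_i − Σ_{j=1}^n (d/du) ψ_{ij}(u, y_j)|_{u = y_i} satisfies y_i′ = Σ_{j=1}^n P_{ij} y_j = (P y)_i for every i; that is, y′ = P y. -/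

import Mathlib

/-- The DeGroot pairwise potentials: `ψ_{ij}(u,v) = −P_{ij}·u·v` for `j ≠ i`
and `ψ_{ii}(u,v) = −(1/2)(P_{ii} − 1)·u²`. -/
noncomputable def degrootPsi {n : ℕ} (P : Matrix (Fin n) (Fin n) ℝ)
    (i j : Fin n) (u v : ℝ) : ℝ :=
  if j = i then -(1/2) * (P i i - 1) * u ^ 2 else -(P i j) * u * v

lemma degroot_deriv {n : ℕ} (P : Matrix (Fin n) (Fin n) ℝ) (y : Fin n → ℝ)
    (i j : Fin n) :
    deriv (fun u => degrootPsi P i j u (y j)) (y i) =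
      if j = i then -((P i i - 1) * y i) else -(P i j * y j) := by
  unfold degrootPsi
  by_cases h : j = i
  · subst h
    simp only [if_pos rfl, if_true]
    have e : deriv (fun u : ℝ => -(1/2) * (P j j - 1) * u ^ 2) (y j)
        = -(1/2) * (P j j - 1) * (2 * y j ^ 1) := by
      rw [deriv_const_mul _ (differentiable_pow 2).differentiableAt, deriv_pow_field]
      ring
    rw [e]; ring
  · simp only [if_neg h]
    have e : (fun u : ℝ => -(P i j) * u * y j) = fun u => (-(P i j) * y j) * u := by
      funext u; ring
    rw [e, deriv_const_mul _ differentiableAt_id, deriv_id'']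
    ring

/-- The DeGroot model is a special case of the energy-based model: the partial
derivatives of the chosen potentials are `−P_{ij} y_j` (and `−(P_{ii}−1) y_i`
on the diagonal), and one synchronous gradient-descent step reproduces the
DeGroot update `y′ = P y`. -/
theorem degroot_embedding (n : ℕ) (hn : 1 ≤ n) (P : Matrix (Fin n) (Fin n) ℝ)
    (y : Fin n → ℝ) :
    (∀ i j : Fin n, deriv (fun u => degrootPsi P i j u (y j)) (y i) =
      if j = i then -((P i i - 1) * y i) else -(P i j * y j)) ∧
    (∀ i : Fin n,
      y i - ∑ j : Fin n, deriv (fun u => degrootPsi P i j u (y j)) (y i) =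
        P.mulVec y i) := by
  refine ⟨fun i j => degroot_deriv P y i j, fun i => ?_⟩
  simp only [degroot_deriv P y i]
  have h : ∀ j : Fin n, (if j = i then -((P i i - 1) * y i) else -(P i j * y j))
      = -(P i j * y j) + (if j = i then y i else 0) := by
    intro j; by_cases h : j = i <;> simp [h] <;> ring
  simp only [h, Finset.sum_add_distrib, Finset.sum_ite_eq' Finset.univ i,
    Finset.mem_univ, if_true, Finset.sum_neg_distrib, Matrix.mulVec,
    dotProduct]
  ring
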